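/- For fixed σ > 0 and α, β > 0, under the Kac-type scaling λ(c) = (c² + 2αc)/σ² and μ(c) = (c² + 2βc)/σ², the expected cycle length E(C̃_{0,0})(c) = E(C_{0,0}) evaluated with rates λ(c), μ(c) and boundary H/c tends to 0 as c → +∞. -/

import Mathlib

open Real Filter Topology

/-- Expected cycle length `E(C_{0,0})` as a function of the rates and the boundary. -/
noncomputable def EC00 (l m h : ℝ) : ℝ :=
  2 * l * (l - m * Real.exp (2 * h * (m - l)) +
      (m - l) * Real.exp (h * (m - l)) * (1 + h * (l + m))) /
    ((l - m) * (l - m * Real.exp (h * (m - l))) ^ 2)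

theorem stmt15 (σ a b H : ℝ) (hσ : 0 < σ) (ha : 0 < a) (hb : 0 < b) (hH : 0 < H) :
    Tendsto (fun c : ℝ =>
        EC00 ((c ^ 2 + 2 * a * c) / σ ^ 2) ((c ^ 2 + 2 * b * c) / σ ^ 2) (H / c))
      atTop (𝓝 0) := by
  rcases eq_or_ne a b with hab | hab
  · subst hab
    have hzero : (fun c : ℝ =>
        EC00 ((c ^ 2 + 2 * a * c) / σ ^ 2) ((c ^ 2 + 2 * a * c) / σ ^ 2) (H / c))
        = fun _ : ℝ => (0 : ℝ) := by
      funext c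
      simp [EC00]
    rw [hzero]
    exact tendsto_const_nhds
  · set s : ℝ := σ ^ 2 with hs
    have hs0 : s ≠ 0 := pow_ne_zero _ hσ.ne'
    set d : ℝ := b - a with hd
    have hd0 : d ≠ 0 := sub_ne_zero.mpr (Ne.symm hab)
    set E : ℝ := Real.exp (2 * H * d / s) with hE
    have hE1 : E ≠ 1 := by
      rw [hE, Ne, Real.exp_eq_one_iff]
      exact div_ne_zero (mul_ne_zero (by positivity) hd0) hs0
    set f : ℝ → ℝ := fun t =>
      t * ((1 + 2 * a * t) *
          (s * ((1 + 2 * a * t) - (1 + 2 * b * t) * E ^ 2 + 2 * d * t * E) +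
            4 * d * H * E * (1 + (a + b) * t))) /
        (-d * ((1 + 2 * a * t) - (1 + 2 * b * t) * E) ^ 2) with hf
    have hden0 : -d * ((1 + 2 * a * (0:ℝ)) - (1 + 2 * b * (0:ℝ)) * E) ^ 2 ≠ 0 := by
      have : (1:ℝ) - E ≠ 0 := sub_ne_zero.mpr (Ne.symm hE1)
      simp only [mul_zero, add_zero]
      exact mul_ne_zero (neg_ne_zero.mpr hd0) (pow_ne_zero _ (by simpa using this))
    have hcont : ContinuousAt f 0 := by
      apply ContinuousAt.div
      · fun_prop
      · fun_prop
      · exact hden0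
    have hf0 : f 0 = 0 := by simp [hf]
    have h1 : Tendsto (fun c : ℝ => 1 / c) atTop (𝓝 0) := by simpa [one_div] using (tendsto_inv_atTop_zero : Tendsto (fun c : ℝ => c⁻¹) atTop (𝓝 0))
    have h2 : Tendsto (fun c : ℝ => f (1 / c)) atTop (𝓝 0) := by
      have := hcont.tendsto
      rw [hf0] at this
      exact this.comp h1
    have hDlim : Tendsto (fun c : ℝ => (1 + 2 * a * (1 / c)) - (1 + 2 * b * (1 / c)) * E)
        atTop (𝓝 (1 - E)) := by
      have : ContinuousAt (fun t : ℝ => (1 + 2 * a * t) - (1 + 2 * b * t) * E) 0 := by fun_prop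
      have ht := this.tendsto.comp h1
      simpa [Function.comp_def] using ht
    have hDev : ∀ᶠ c : ℝ in atTop, (1 + 2 * a * (1 / c)) - (1 + 2 * b * (1 / c)) * E ≠ 0 :=
      hDlim.eventually_ne (sub_ne_zero.mpr (Ne.symm hE1))
    refine h2.congr' ?_
    filter_upwards [hDev, eventually_gt_atTop (0:ℝ)] with c hD hc
    have hc0 : c ≠ 0 := hc.ne'
    -- rewrite exponentials
    have harg : (H / c) * ((c ^ 2 + 2 * b * c) / s - (c ^ 2 + 2 * a * c) / s) = 2 * H * d / s := by
      field_simp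
      ring
    have e2 : Real.exp ((H / c) * ((c ^ 2 + 2 * b * c) / s - (c ^ 2 + 2 * a * c) / s)) = E := by
      rw [harg, hE]
    have e3 : Real.exp (2 * (H / c) * ((c ^ 2 + 2 * b * c) / s - (c ^ 2 + 2 * a * c) / s))
        = E ^ 2 := by
      have : 2 * (H / c) * ((c ^ 2 + 2 * b * c) / s - (c ^ 2 + 2 * a * c) / s)
          = 2 * H * d / s + 2 * H * d / s := by
        field_simp
        ring
      rw [this, Real.exp_add, hE, sq]
    have hlm : (c ^ 2 + 2 * a * c) / s - (c ^ 2 + 2 * b * c) / s ≠ 0 := by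
      have : (c ^ 2 + 2 * a * c) / s - (c ^ 2 + 2 * b * c) / s = -(2 * d * c) / s := by
        field_simp; ring
      rw [this]
      exact div_ne_zero (neg_ne_zero.mpr (by positivity)) hs0
    have hlmE : (c ^ 2 + 2 * a * c) / s - (c ^ 2 + 2 * b * c) / s * E ≠ 0 := by
      have heq : (c ^ 2 + 2 * a * c) / s - (c ^ 2 + 2 * b * c) / s * E
          = c ^ 2 / s * ((1 + 2 * a * (1 / c)) - (1 + 2 * b * (1 / c)) * E) := by
        field_simp
      rw [heq]
      exact mul_ne_zero (div_ne_zero (pow_ne_zero _ hc0) hs0) hD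
    rw [EC00, hf]
    rw [e2, e3]
    rw [div_eq_div_iff]
    · field_simp
      ring
    · exact mul_ne_zero (neg_ne_zero.mpr hd0) (pow_ne_zero _ hD)
    · exact mul_ne_zero hlm (pow_ne_zero _ hlmE)
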